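/- For fixed l ≥ 0 and m ≥ l, ν₂(A_{l,m+1}) − ν₂(A_{l,m}) = ν₂(m+l+1) − ν₂(m−l+1). -/

import Mathlib

open Finset

noncomputable def A (l m : ℕ) : ℚ :=
  ((l.factorial * m.factorial : ℕ) : ℚ) / 2 ^ (m - l) *
    ∑ k ∈ Finset.Icc l m,
      (2 : ℚ) ^ k * ((2 * m - 2 * k).choose (m - k)) * ((m + k).choose m) * (k.choose l)

namespace ValA

def a (l m k : ℕ) : ℕ :=
  2 ^ k * ((2 * m - 2 * k).choose (m - k)) * ((m + k).choose m) * (k.choose l)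

def b (l m k : ℕ) : ℕ := l.factorial * m.factorial * a l m k

lemma a_pos {l m k : ℕ} (hlk : l ≤ k) (hkm : k ≤ m) : 0 < a l m k := by
  have h1 : 0 < (2 * m - 2 * k).choose (m - k) := Nat.choose_pos (by omega)
  have h2 : 0 < (m + k).choose m := Nat.choose_pos (by omega)
  have h3 : 0 < k.choose l := Nat.choose_pos hlk
  have h4 : 0 < 2 ^ k := Nat.pow_pos (by norm_num)
  unfold a; positivity

lemma b_pos {l m k : ℕ} (hlk : l ≤ k) (hkm : k ≤ m) : 0 < b l m k := by
  have := a_pos hlk hkm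
  have h1 := Nat.factorial_pos l
  have h2 := Nat.factorial_pos m
  unfold b; positivity

lemma pv_fact_succ (n : ℕ) :
    padicValNat 2 (n + 1).factorial = padicValNat 2 (n + 1) + padicValNat 2 n.factorial := by
  rw [Nat.factorial_succ, padicValNat.mul (by omega) (Nat.factorial_pos n).ne']

lemma pv_le_of_dvd {x y : ℕ} (hy : y ≠ 0) (h : x ∣ y) :
    padicValNat 2 x ≤ padicValNat 2 y :=
  (padicValNat_dvd_iff_le hy).mp (dvd_trans pow_padicValNat_dvd h)

lemma one_le_pv {n : ℕ} (hn : n ≠ 0) (h : 2 ∣ n) : 1 ≤ padicValNat 2 n :=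
  one_le_padicValNat_of_dvd hn h

/-- valuation of each summand:
`ν₂(b k) + ν₂((m-k)!) + ν₂((k-l)!) = m + ν₂((m+k)!)`. -/
lemma val_b {l m k : ℕ} (hlk : l ≤ k) (hkm : k ≤ m) :
    padicValNat 2 (b l m k) + padicValNat 2 (m - k).factorial
      + padicValNat 2 (k - l).factorial = m + padicValNat 2 (m + k).factorial := by
  have e1 : (2 * m - 2 * k).choose (m - k) * ((m - k).factorial * (m - k).factorial)
      = (2 * (m - k)).factorial := by
    have := Nat.choose_mul_factorial_mul_factorial (show m - k ≤ 2 * (m - k) by omega)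
    rw [show 2 * (m - k) - (m - k) = m - k by omega] at this
    rw [show 2 * m - 2 * k = 2 * (m - k) by omega]
    linarith [this]
  have e2 : (m + k).choose m * (m.factorial * k.factorial) = (m + k).factorial := by
    have := Nat.choose_mul_factorial_mul_factorial (show m ≤ m + k by omega)
    rw [show m + k - m = k by omega] at this
    linarith [this]
  have e3 : k.choose l * (l.factorial * (k - l).factorial) = k.factorial := by
    have := Nat.choose_mul_factorial_mul_factorial hlk
    linarith [this]
  have hC1 : 0 < (2 * m - 2 * k).choose (m - k) := Nat.choose_pos (by omega)
  have hC2 : 0 < (m + k).choose m := Nat.choose_pos (by omega)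
  have hC3 : 0 < k.choose l := Nat.choose_pos hlk
  -- valuations of the three choose identities
  have v1 : padicValNat 2 ((2 * m - 2 * k).choose (m - k))
      + (padicValNat 2 (m - k).factorial + padicValNat 2 (m - k).factorial)
      = padicValNat 2 (m - k).factorial + (m - k) := by
    have := congrArg (padicValNat 2) e1
    rw [padicValNat.mul hC1.ne' (by positivity),
      padicValNat.mul (Nat.factorial_pos _).ne' (Nat.factorial_pos _).ne',
      padicValNat_factorial_mul] at this
    omega
  have v2 : padicValNat 2 ((m + k).choose m)
      + (padicValNat 2 m.factorial + padicValNat 2 k.factorial)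
      = padicValNat 2 (m + k).factorial := by
    have := congrArg (padicValNat 2) e2
    rwa [padicValNat.mul hC2.ne' (by positivity),
      padicValNat.mul (Nat.factorial_pos _).ne' (Nat.factorial_pos _).ne'] at this
  have v3 : padicValNat 2 (k.choose l)
      + (padicValNat 2 l.factorial + padicValNat 2 (k - l).factorial)
      = padicValNat 2 k.factorial := by
    have := congrArg (padicValNat 2) e3
    rwa [padicValNat.mul hC3.ne' (by positivity),
      padicValNat.mul (Nat.factorial_pos _).ne' (Nat.factorial_pos _).ne'] at this
  have vb : padicValNat 2 (b l m k)
      = padicValNat 2 l.factorial + padicValNat 2 m.factorial + k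
        + padicValNat 2 ((2 * m - 2 * k).choose (m - k))
        + padicValNat 2 ((m + k).choose m) + padicValNat 2 (k.choose l) := by
    unfold b a
    rw [padicValNat.mul (by positivity) (by positivity),
      padicValNat.mul (Nat.factorial_pos _).ne' (Nat.factorial_pos _).ne',
      padicValNat.mul (by positivity) hC3.ne',
      padicValNat.mul (by positivity) hC2.ne',
      padicValNat.mul (by positivity) hC1.ne',
      padicValNat.prime_pow]
    ring
  omega

/-- key strict inequality `ν₂((m+l)!) < ν₂((m+k)!) + ν₂(C(m-l, k-l))` for `l < k ≤ m`. -/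
lemma key_ineq {l m k : ℕ} (hlk : l < k) (hkm : k ≤ m) :
    padicValNat 2 (m + l).factorial
      < padicValNat 2 (m + k).factorial + padicValNat 2 ((m - l).choose (k - l)) := by
  rcases eq_or_lt_of_le (show l + 1 ≤ k by omega) with hk | hk
  · -- k = l + 1
    subst hk
    rw [show l + 1 - l = 1 by omega, Nat.choose_one_right,
      show m + (l + 1) = (m + l) + 1 by omega, pv_fact_succ]
    have hpar : 2 ∣ m + l + 1 ∨ 2 ∣ m - l := by omega
    rcases hpar with hp | hp
    · have := one_le_pv (show m + l + 1 ≠ 0 by omega) hp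
      omega
    · have := one_le_pv (show m - l ≠ 0 by omega) hp
      omega
  · -- l + 2 ≤ k
    have hd : (m + l + 2).factorial ∣ (m + k).factorial :=
      Nat.factorial_dvd_factorial (by omega)
    have h1 := pv_le_of_dvd (Nat.factorial_pos _).ne' hd
    have h2 : padicValNat 2 (m + l + 2).factorial
        = padicValNat 2 (m + l + 2) + (padicValNat 2 (m + l + 1)
          + padicValNat 2 (m + l).factorial) := by
      rw [show m + l + 2 = (m + l + 1) + 1 from rfl, pv_fact_succ, pv_fact_succ]
    have hpar : 2 ∣ m + l + 1 ∨ 2 ∣ m + l + 2 := by omega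
    rcases hpar with hp | hp
    · have := one_le_pv (show m + l + 1 ≠ 0 by omega) hp
      omega
    · have := one_le_pv (show m + l + 2 ≠ 0 by omega) hp
      omega

lemma b_lt {l m k : ℕ} (hlk : l < k) (hkm : k ≤ m) :
    padicValNat 2 (b l m l) < padicValNat 2 (b l m k) := by
  have hl : l ≤ m := le_trans (le_of_lt hlk) hkm
  have vL := val_b (le_refl l) hl
  rw [Nat.sub_self, Nat.factorial_zero, padicValNat.one] at vL
  have vK := val_b (le_of_lt hlk) hkm
  -- ν((m-l)!) = ν(C(m-l, k-l)) + ν((k-l)!) + ν((m-k)!)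
  have eC : (m - l).choose (k - l) * ((k - l).factorial * (m - k).factorial)
      = (m - l).factorial := by
    have := Nat.choose_mul_factorial_mul_factorial (show k - l ≤ m - l by omega)
    rw [show m - l - (k - l) = m - k by omega] at this
    linarith [this]
  have hC : 0 < (m - l).choose (k - l) := Nat.choose_pos (by omega)
  have vC : padicValNat 2 ((m - l).choose (k - l))
      + (padicValNat 2 (k - l).factorial + padicValNat 2 (m - k).factorial)
      = padicValNat 2 (m - l).factorial := by
    have := congrArg (padicValNat 2) eC
    rwa [padicValNat.mul hC.ne' (by positivity),
      padicValNat.mul (Nat.factorial_pos _).ne' (Nat.factorial_pos _).ne'] at this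
  have hkey := key_ineq hlk hkm
  omega

/-- The 2-adic valuation of `A l m`. -/
lemma pv_A (l m : ℕ) (h : l ≤ m) :
    padicValRat 2 (A l m) = (l : ℤ) + (padicValNat 2 (m + l).factorial : ℤ)
      - (padicValNat 2 (m - l).factorial : ℤ) := by
  classical
  set N : ℕ := ∑ k ∈ Finset.Icc l m, b l m k with hN
  have hAN : A l m = (N : ℚ) / 2 ^ (m - l) := by
    rw [A, hN]
    rw [div_mul_eq_mul_div]
    congr 1
    push_cast [b, a]
    rw [Finset.mul_sum]
  have hNpos : 0 < N := by
    refine Finset.sum_pos (fun k hk => ?_) ⟨l, by simp [Finset.mem_Icc, h]⟩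
    rw [Finset.mem_Icc] at hk
    exact b_pos hk.1 hk.2
  -- valuation of the sum equals valuation of the k = l term
  have hsplit : Finset.Icc l m = insert l (Finset.Icc (l + 1) m) := by
    ext x; simp only [Finset.mem_Icc, Finset.mem_insert]; omega
  have hnotmem : l ∉ Finset.Icc (l + 1) m := by simp
  set v := padicValNat 2 (b l m l) with hv
  set R : ℕ := ∑ k ∈ Finset.Icc (l + 1) m, b l m k with hR
  have hNbR : N = b l m l + R := by rw [hN, hsplit, Finset.sum_insert hnotmem]
  have hdvdR : 2 ^ (v + 1) ∣ R := by
    refine Finset.dvd_sum fun k hk => ?_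
    rw [Finset.mem_Icc] at hk
    have hlt := b_lt (show l < k by omega) hk.2
    exact (padicValNat_dvd_iff_le (b_pos (by omega) hk.2).ne').mpr (by omega)
  have hd1 : 2 ^ v ∣ N := by
    rw [hNbR]
    exact dvd_add pow_padicValNat_dvd (dvd_trans (pow_dvd_pow 2 (Nat.le_succ v)) hdvdR)
  have hd2 : ¬ 2 ^ (v + 1) ∣ N := by
    intro hc
    have hbl : 2 ^ (v + 1) ∣ b l m l := by
      have : b l m l = N - R := by omega
      rw [this]
      exact Nat.dvd_sub hc hdvdR
    exact pow_succ_padicValNat_not_dvd (b_pos le_rfl h).ne' hbl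
  have hνN : padicValNat 2 N = v := by
    refine le_antisymm ?_ ((padicValNat_dvd_iff_le hNpos.ne').mp hd1)
    by_contra h'
    exact hd2 ((padicValNat_dvd_iff_le hNpos.ne').mpr (by omega))
  have hvb : v + padicValNat 2 (m - l).factorial = m + padicValNat 2 (m + l).factorial := by
    have := val_b (le_refl l) h
    rwa [Nat.sub_self, Nat.factorial_zero, padicValNat.one, add_zero] at this
  have hQpow : (2 : ℚ) ^ (m - l) = ((2 ^ (m - l) : ℕ) : ℚ) := by push_cast; ring
  rw [hAN, padicValRat.div (by exact_mod_cast hNpos.ne') (by positivity), hQpow,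
    padicValRat.of_nat, padicValRat.of_nat, padicValNat.prime_pow, hνN]
  omega

end ValA

theorem val_A_diff (l m : ℕ) (h : l ≤ m) :
    padicValRat 2 (A l (m + 1)) - padicValRat 2 (A l m) =
      (padicValNat 2 (m + l + 1) : ℤ) - (padicValNat 2 (m - l + 1) : ℤ) := by
  rw [ValA.pv_A l m h, ValA.pv_A l (m + 1) (le_trans h (Nat.le_succ m))]
  rw [show m + 1 + l = (m + l) + 1 by omega, show m + 1 - l = (m - l) + 1 by omega,
    ValA.pv_fact_succ, ValA.pv_fact_succ]
  push_cast
  ring
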